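/- (Theorem 2.) There exist γ₀ > 0 and μ̂₀ > 0 such that for every γ ∈ [0, γ₀] (so B + γC is invertible) and every step-size sequence (μ_k)_{k≥1} with 0 < μ_k ≤ μ̂₀ for all k, Σ_{k=1}^∞ μ_k = ∞ and Σ_{k=1}^∞ μ_k² < ∞, the error process satisfies lim_{k→∞} E[e^k (e^k)ᵀ] = 0. -/

import Mathlib

open MeasureTheory ProbabilityTheory Matrix Filter

/-- Measurable-space structure on matrices (entrywise). -/
instance matrixMeasurableSpace {m n α : Type*} [MeasurableSpace α] :
    MeasurableSpace (Matrix m n α) := MeasurableSpace.pi (X := fun _ : m => n → α)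

/-- The Euclidean norm of a vector. -/
noncomputable def euclNorm {ι : Type*} [Fintype ι] (v : ι → ℝ) : ℝ :=
  Real.sqrt (∑ i, (v i) ^ 2)

/-- The Frobenius norm of a matrix. -/
noncomputable def frobNorm {ι κ : Type*} [Fintype ι] [Fintype κ] (F : Matrix ι κ ℝ) : ℝ :=
  Real.sqrt (∑ i, ∑ j, (F i j) ^ 2)

/-- Entrywise expectation of a random vector. -/
noncomputable def Evec {Ω' : Type*} [MeasurableSpace Ω'] (P : Measure Ω') {ι : Type*}
    (F : Ω' → ι → ℝ) : ι → ℝ := fun i => ∫ ω, F ω i ∂P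

/-- Entrywise expectation of a random matrix. -/
noncomputable def Emat {Ω' : Type*} [MeasurableSpace Ω'] (P : Measure Ω') {ι κ : Type*}
    (F : Ω' → Matrix ι κ ℝ) : Matrix ι κ ℝ := Matrix.of fun i j => ∫ ω, F ω i j ∂P

/-- Entrywise integrability of a random vector. -/
def IntV {Ω' : Type*} [MeasurableSpace Ω'] (P : Measure Ω') {ι : Type*}
    (F : Ω' → ι → ℝ) : Prop := ∀ i, Integrable (fun ω => F ω i) P

/-- Entrywise integrability of a random matrix. -/
def IntM {Ω' : Type*} [MeasurableSpace Ω'] (P : Measure Ω') {ι κ : Type*}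
    (F : Ω' → Matrix ι κ ℝ) : Prop := ∀ i j, Integrable (fun ω => F ω i j) P

/-- `vec(P) vec(Q)ᵀ`, with `vec` stacking the columns of a square matrix. -/
def vecOuter {M : ℕ} (P Q : Matrix (Fin M) (Fin M) ℝ) :
    Matrix (Fin M × Fin M) (Fin M × Fin M) ℝ :=
  Matrix.of fun p q => P p.1 p.2 * Q q.1 q.2

/-- `vec(P) vᵀ` for a square matrix `P` and a vector `v`. -/
def vecOuterVec {M : ℕ} (P : Matrix (Fin M) (Fin M) ℝ) (v : Fin M → ℝ) :
    Matrix (Fin M × Fin M) (Fin M) ℝ :=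
  Matrix.of fun p i => P p.1 p.2 * v i

open Metric

lemma abs_entry_le_frobNorm {ι κ : Type*} [Fintype ι] [Fintype κ] (X : Matrix ι κ ℝ)
    (i : ι) (j : κ) : |X i j| ≤ frobNorm X := by
  rw [frobNorm, ← Real.sqrt_sq_eq_abs]
  apply Real.sqrt_le_sqrt
  calc (X i j) ^ 2 ≤ ∑ j', (X i j') ^ 2 :=
        Finset.single_le_sum (f := fun j' => (X i j') ^ 2) (fun _ _ => sq_nonneg _) (Finset.mem_univ _)
    _ ≤ ∑ i', ∑ j', (X i' j') ^ 2 :=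
        Finset.single_le_sum (f := fun i' => ∑ j', (X i' j') ^ 2)
          (fun _ _ => Finset.sum_nonneg fun _ _ => sq_nonneg _) (Finset.mem_univ _)

lemma frobNorm_nonneg {ι κ : Type*} [Fintype ι] [Fintype κ] (X : Matrix ι κ ℝ) :
    0 ≤ frobNorm X := Real.sqrt_nonneg _


lemma scalar_tendsto (a K : ℝ) (ha : 0 < a) (hK : 0 ≤ K) (μ f : ℕ → ℝ)
    (hf0 : ∀ n, 0 ≤ f n)
    (hμpos : ∀ k, 1 ≤ k → 0 < μ k)
    (hcontr : ∀ k, 1 ≤ k → 0 ≤ 1 - a * μ k)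
    (hrec : ∀ k, 1 ≤ k → f k ≤ (1 - a * μ k) * f (k - 1) + K * μ k ^ 2)
    (hdiv : ¬ Summable (fun n : ℕ => μ (n + 1)))
    (hsq : Summable (fun n : ℕ => μ (n + 1) ^ 2)) :
    Tendsto f atTop (nhds 0) := by
  set g : ℕ → ℝ := fun n => μ (n + 1) ^ 2 with hg
  have hgnn : ∀ n, 0 ≤ g n := fun n => sq_nonneg _
  have hrec' : ∀ n : ℕ, f (n + 1) ≤ (1 - a * μ (n + 1)) * f n + K * g n := by
    intro n; simpa using hrec (n + 1) (by omega)
  have hstep1 : ∀ n, a * μ (n + 1) * f n ≤ f n - f (n + 1) + K * g n := by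
    intro n; have := hrec' n; nlinarith [hf0 n]
  set S : ℝ := ∑' n, g n with hS
  have hSnn : 0 ≤ S := tsum_nonneg hgnn
  have hpartial : ∀ N : ℕ, ∑ n ∈ Finset.range N, a * μ (n + 1) * f n
      ≤ f 0 - f N + K * ∑ n ∈ Finset.range N, g n := by
    intro N; induction N with
    | zero => simp
    | succ N ih =>
      rw [Finset.sum_range_succ, Finset.sum_range_succ]
      have := hstep1 N
      nlinarith
  have hsummul : Summable (fun n => μ (n + 1) * f n) := by
    have h1 : ∀ n, 0 ≤ μ (n + 1) * f n := fun n =>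
      mul_nonneg (hμpos (n + 1) (by omega)).le (hf0 n)
    have h2 : ∀ N : ℕ, ∑ n ∈ Finset.range N, μ (n + 1) * f n ≤ (f 0 + K * S) / a := by
      intro N
      rw [le_div_iff₀ ha]
      have h3 : ∑ n ∈ Finset.range N, g n ≤ S :=
        Summable.sum_le_tsum (Finset.range N) (fun i _ => hgnn i) hsq
      have h4 := hpartial N
      have h5 : ∑ n ∈ Finset.range N, a * μ (n + 1) * f n
          = (∑ n ∈ Finset.range N, μ (n + 1) * f n) * a := by
        rw [Finset.sum_mul]; exact Finset.sum_congr rfl fun n _ => by ring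
      nlinarith [hf0 N]
    exact summable_of_sum_range_le h1 h2
  have hstep2 : ∀ ε : ℝ, 0 < ε → ∀ N : ℕ, ∃ n, N ≤ n ∧ f n < ε := by
    intro ε hε N
    by_contra hcon
    push_neg at hcon
    apply hdiv
    rw [← summable_nat_add_iff N]
    have hshift : Summable (fun n => ε⁻¹ * (μ (n + N + 1) * f (n + N))) := by
      have := (summable_nat_add_iff (f := fun n => μ (n + 1) * f n) N).2 hsummul
      exact this.mul_left _
    apply Summable.of_nonneg_of_le (fun n => (hμpos (n + N + 1) (by omega)).le) _ hshift
    intro n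
    have hfn := hcon (n + N) (by omega)
    have hμn := hμpos (n + N + 1) (by omega)
    have : μ (n + N + 1) * ε ≤ μ (n + N + 1) * f (n + N) := by nlinarith
    calc μ (n + N + 1) = ε⁻¹ * (μ (n + N + 1) * ε) := by field_simp
      _ ≤ ε⁻¹ * (μ (n + N + 1) * f (n + N)) := by
          apply mul_le_mul_of_nonneg_left this (by positivity)
  rw [Metric.tendsto_atTop]
  intro ε hε
  have hKpos : (0:ℝ) < 2 * (K + 1) := by linarith
  have htail : Tendsto (fun i => ∑' n, g (n + i)) atTop (nhds 0) := tendsto_sum_nat_add g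
  have hε' : 0 < ε / (2 * (K + 1)) := by positivity
  obtain ⟨N₀, hN₀⟩ := (Metric.tendsto_atTop.1 htail) (ε / (2 * (K + 1))) hε'
  have hN₀' : ∑' n, g (n + N₀) < ε / (2 * (K + 1)) := by
    have := hN₀ N₀ le_rfl
    rw [Real.dist_eq, sub_zero] at this
    calc ∑' n, g (n + N₀) ≤ |∑' n, g (n + N₀)| := le_abs_self _
      _ < _ := this
  obtain ⟨n₁, hn₁N, hn₁f⟩ := hstep2 (ε / 2) (by positivity) N₀
  have hgsum : ∀ m : ℕ, Summable (fun n => g (n + m)) :=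
    fun m => (summable_nat_add_iff m).2 hsq
  have htailmono : ∑' n, g (n + n₁) ≤ ∑' n, g (n + N₀) := by
    obtain ⟨d, rfl⟩ := Nat.exists_eq_add_of_le hn₁N
    have h6 := Summable.sum_add_tsum_nat_add (f := fun n => g (n + N₀)) d (hgsum N₀)
    have h7 : ∀ n : ℕ, g (n + d + N₀) = g (n + (N₀ + d)) := by intro n; ring_nf
    have h8 : (0:ℝ) ≤ ∑ i ∈ Finset.range d, g (i + N₀) :=
      Finset.sum_nonneg fun i _ => hgnn _
    calc ∑' n, g (n + (N₀ + d)) = ∑' n, g (n + d + N₀) := by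
          exact tsum_congr fun n => (h7 n).symm
      _ ≤ ∑' n, g (n + N₀) := by linarith
  have hclaim : ∀ m : ℕ, f (n₁ + m) ≤ f n₁ + K * ∑' n, g (n + n₁) := by
    intro m
    have key : ∀ m : ℕ, f (n₁ + m) ≤ f n₁ + K * ∑ j ∈ Finset.range m, g (n₁ + j) := by
      intro m; induction m with
      | zero => simp
      | succ m ih =>
        rw [Finset.sum_range_succ]
        have h9 := hrec' (n₁ + m)
        have h10 := hcontr (n₁ + m + 1) (by omega)
        have h11 := hμpos (n₁ + m + 1) (by omega)
        have h12 := hf0 (n₁ + m)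
        have h13 : (1 - a * μ (n₁ + m + 1)) * f (n₁ + m) ≤ f (n₁ + m) := by nlinarith [mul_nonneg (mul_nonneg ha.le h11.le) h12]
        have : f (n₁ + (m + 1)) ≤ f (n₁ + m) + K * g (n₁ + m) := by
          have h14 : n₁ + (m + 1) = n₁ + m + 1 := by ring
          rw [h14]
          calc f (n₁ + m + 1) ≤ (1 - a * μ (n₁ + m + 1)) * f (n₁ + m) + K * g (n₁ + m) :=
                h9
            _ ≤ f (n₁ + m) + K * g (n₁ + m) := by linarith
        nlinarith [hgnn (n₁ + m)]
    have h15 : ∑ j ∈ Finset.range m, g (n₁ + j) ≤ ∑' n, g (n + n₁) := by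
      have := Summable.sum_le_tsum (Finset.range m) (fun i _ => hgnn (i + n₁)) (hgsum n₁)
      calc ∑ j ∈ Finset.range m, g (n₁ + j) = ∑ j ∈ Finset.range m, g (j + n₁) := by
            exact Finset.sum_congr rfl fun j _ => by ring_nf
        _ ≤ _ := this
    have := key m
    nlinarith
  refine ⟨n₁, fun n hn => ?_⟩
  rw [Real.dist_eq, sub_zero, abs_of_nonneg (hf0 n)]
  obtain ⟨m, rfl⟩ := Nat.exists_eq_add_of_le hn
  have h16 := hclaim m
  have h17 : K * ∑' n, g (n + n₁) ≤ K * (ε / (2 * (K + 1))) := by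
    apply mul_le_mul_of_nonneg_left _ hK
    linarith
  have h18 : K * (ε / (2 * (K + 1))) ≤ ε / 2 := by
    rw [mul_div_assoc' K ε _, div_le_div_iff₀ hKpos two_pos]
    nlinarith
  linarith



lemma euclNorm_sq {ι : Type*} [Fintype ι] (v : ι → ℝ) :
    euclNorm v ^ 2 = ∑ i, (v i) ^ 2 :=
  Real.sq_sqrt (Finset.sum_nonneg fun _ _ => sq_nonneg _)

lemma euclNorm_smul {ι : Type*} [Fintype ι] (s : ℝ) (v : ι → ℝ) :
    euclNorm (s • v) = |s| * euclNorm v := by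
  unfold euclNorm
  rw [← Real.sqrt_sq_eq_abs, ← Real.sqrt_mul (sq_nonneg s)]
  congr 1
  rw [Finset.mul_sum]
  exact Finset.sum_congr rfl fun i _ => by simp [Pi.smul_apply, smul_eq_mul]; ring

lemma exists_gamma_c {M : ℕ} (hM : 0 < M) (A B C : Matrix (Fin M) (Fin M) ℝ)
    (hBinv : IsUnit B)
    (hBA : ∀ x : Fin M → ℝ, euclNorm x = 1 → 0 < x ⬝ᵥ (B⁻¹ * A).mulVec x) :
    ∃ γ₀ : ℝ, 0 < γ₀ ∧ ∃ c : ℝ, 0 < c ∧ ∃ R : ℝ, 1 ≤ R ∧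
      ∀ γ : ℝ, 0 ≤ γ → γ ≤ γ₀ →
        IsUnit (B + γ • C) ∧
        (∀ x : Fin M → ℝ, c * (∑ i, x i ^ 2) ≤ x ⬝ᵥ ((B + γ • C)⁻¹ * A).mulVec x) ∧
        (∑ i, ∑ j, ((B + γ • C)⁻¹ i j) ^ 2 ≤ R) := by
  -- the unit sphere
  set S : Set (Fin M → ℝ) := {x | euclNorm x = 1} with hSdef
  have heucl_cont : Continuous (euclNorm (ι := Fin M)) := by
    unfold euclNorm
    exact Real.continuous_sqrt.comp
      (continuous_finset_sum _ fun i _ => (continuous_apply i).pow 2)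
  have hSclosed : IsClosed S := by
    have : S = euclNorm ⁻¹' {1} := rfl
    rw [this]
    exact isClosed_singleton.preimage heucl_cont
  have hSsub : S ⊆ closedBall 0 1 := by
    intro x hx
    rw [mem_closedBall, dist_pi_le_iff zero_le_one]
    intro i
    simp only [Real.dist_eq, Pi.zero_apply, sub_zero]
    rw [← Real.sqrt_sq_eq_abs]
    have h1 : (x i) ^ 2 ≤ ∑ j, (x j) ^ 2 :=
      Finset.single_le_sum (f := fun j => (x j) ^ 2) (fun _ _ => sq_nonneg _)
        (Finset.mem_univ i)
    calc Real.sqrt ((x i) ^ 2) ≤ Real.sqrt (∑ j, (x j) ^ 2) := Real.sqrt_le_sqrt h1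
      _ = 1 := hx
  have hScompact : IsCompact S :=
    (isCompact_closedBall (0 : Fin M → ℝ) 1).of_isClosed_subset hSclosed hSsub
  have hSne : S.Nonempty := by
    refine ⟨fun i => if i = ⟨0, hM⟩ then 1 else 0, ?_⟩
    show euclNorm _ = 1
    unfold euclNorm
    rw [show (∑ i, ((if i = (⟨0, hM⟩ : Fin M) then (1:ℝ) else 0)) ^ 2) = 1 by
      rw [Finset.sum_congr rfl (fun i _ => show ((if i = (⟨0, hM⟩ : Fin M) then (1:ℝ) else 0)) ^ 2
          = if i = (⟨0, hM⟩ : Fin M) then (1:ℝ) else 0 by split <;> norm_num)]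
      simp]
    exact Real.sqrt_one
  -- minimum of the quadratic form at γ = 0
  set g : (Fin M → ℝ) → ℝ := fun x => x ⬝ᵥ (B⁻¹ * A).mulVec x with hgdef
  have hgcont : Continuous g := by
    unfold g
    simp only [dotProduct, Matrix.mulVec]
    exact continuous_finset_sum _ fun i _ => (continuous_apply i).mul
      (continuous_finset_sum _ fun j _ => continuous_const.mul (continuous_apply j))
  obtain ⟨x₀, hx₀S, hx₀min⟩ := hScompact.exists_isMinOn hSne hgcont.continuousOn
  set c₀ : ℝ := g x₀ with hc₀def
  have hc₀pos : 0 < c₀ := hBA x₀ hx₀S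
  set c : ℝ := c₀ / 2 with hcdef
  have hcpos : 0 < c := by positivity
  -- continuous ingredients
  set dt : ℝ → ℝ := fun γ => (B + γ • C).det with hdtdef
  have hdtc : Continuous dt := by
    apply Continuous.matrix_det
    exact continuous_const.add (continuous_id.smul continuous_const)
  set adj : ℝ → Matrix (Fin M) (Fin M) ℝ := fun γ => (B + γ • C).adjugate with hadjdef
  have hadjc : Continuous adj := by
    apply Continuous.matrix_adjugate
    exact continuous_const.add (continuous_id.smul continuous_const)
  have hinv : ∀ γ : ℝ, (B + γ • C)⁻¹ = (dt γ)⁻¹ • adj γ := by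
    intro γ
    rw [Matrix.inv_def, Ring.inverse_eq_inv]
  set Nr : ℝ → ℝ := fun γ => ∑ i, ∑ j, ((dt γ)⁻¹ * adj γ i j) ^ 2 with hNrdef
  have hNreq : ∀ γ, Nr γ = ∑ i, ∑ j, ((B + γ • C)⁻¹ i j) ^ 2 := by
    intro γ
    refine Finset.sum_congr rfl fun i _ => Finset.sum_congr rfl fun j _ => ?_
    rw [hinv γ, Matrix.smul_apply, smul_eq_mul]
  set R : ℝ := Nr 0 + 1 with hRdef
  have hNr0 : 0 ≤ Nr 0 := Finset.sum_nonneg fun _ _ => Finset.sum_nonneg fun _ _ => sq_nonneg _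
  have hR1 : 1 ≤ R := by rw [hRdef]; linarith
  -- the quadratic form as a jointly continuous function
  set Q : ℝ × (Fin M → ℝ) → ℝ :=
    fun p => (dt p.1)⁻¹ * ∑ i, ∑ j, p.2 i * (adj p.1 * A) i j * p.2 j with hQdef
  have hQeq : ∀ γ (x : Fin M → ℝ), Q (γ, x) = x ⬝ᵥ ((B + γ • C)⁻¹ * A).mulVec x := by
    intro γ x
    rw [hinv γ, Matrix.smul_mul, Matrix.smul_mulVec, dotProduct_smul, smul_eq_mul]
    show (dt γ)⁻¹ * (∑ i, ∑ j, x i * (adj γ * A) i j * x j)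
        = (dt γ)⁻¹ * (x ⬝ᵥ (adj γ * A).mulVec x)
    congr 1
    simp only [dotProduct, Matrix.mulVec, Finset.mul_sum]
    exact Finset.sum_congr rfl fun i _ => Finset.sum_congr rfl fun j _ => by ring
  have hpolyc : Continuous fun p : ℝ × (Fin M → ℝ) =>
      ∑ i, ∑ j, p.2 i * (adj p.1 * A) i j * p.2 j := by
    refine continuous_finset_sum _ fun i _ => continuous_finset_sum _ fun j _ => ?_
    have h1 : Continuous fun p : ℝ × (Fin M → ℝ) => (adj p.1 * A) i j :=
      ((hadjc.comp continuous_fst).matrix_mul continuous_const).matrix_elem i j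
    exact (((continuous_apply i).comp continuous_snd).mul h1).mul
      ((continuous_apply j).comp continuous_snd)
  -- the open region
  set O : Set (ℝ × (Fin M → ℝ)) := {p | dt p.1 ≠ 0 ∧ c < Q p ∧ Nr p.1 < R} with hOdef
  have hO1open : IsOpen {p : ℝ × (Fin M → ℝ) | dt p.1 ≠ 0} :=
    isOpen_compl_singleton.preimage (hdtc.comp continuous_fst)
  have hQcontOn : ContinuousOn Q {p : ℝ × (Fin M → ℝ) | dt p.1 ≠ 0} := by
    apply ContinuousOn.mul
    · exact ContinuousOn.inv₀ (hdtc.comp continuous_fst).continuousOn fun p hp => hp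
    · exact hpolyc.continuousOn
  have hNrcontOn : ContinuousOn (fun p : ℝ × (Fin M → ℝ) => Nr p.1)
      {p : ℝ × (Fin M → ℝ) | dt p.1 ≠ 0} := by
    apply continuousOn_finset_sum
    intro i _
    apply continuousOn_finset_sum
    intro j _
    apply ContinuousOn.pow
    apply ContinuousOn.mul
    · exact ContinuousOn.inv₀ (hdtc.comp continuous_fst).continuousOn fun p hp => hp
    · exact (((hadjc.comp continuous_fst).matrix_elem i j)).continuousOn
  have hOopen : IsOpen O := by
    have h2 : O = ({p | dt p.1 ≠ 0} ∩ Q ⁻¹' (Set.Ioi c)) ∩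
        ({p | dt p.1 ≠ 0} ∩ (fun p : ℝ × (Fin M → ℝ) => Nr p.1) ⁻¹' (Set.Iio R)) := by
      ext p
      simp only [hOdef, Set.mem_setOf_eq, Set.mem_inter_iff, Set.mem_preimage,
        Set.mem_Ioi, Set.mem_Iio]
      tauto
    rw [h2]
    exact ((hQcontOn.isOpen_inter_preimage hO1open isOpen_Ioi)).inter
      ((hNrcontOn.isOpen_inter_preimage hO1open isOpen_Iio))
  have hB0 : B + (0:ℝ) • C = B := by rw [zero_smul, add_zero]
  have hdt0 : dt 0 ≠ 0 := by
    rw [hdtdef]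
    simp only [hB0]
    have := (Matrix.isUnit_iff_isUnit_det B).1 hBinv
    exact IsUnit.ne_zero this
  have hsub : ({0} : Set ℝ) ×ˢ S ⊆ O := by
    rintro ⟨γ, x⟩ ⟨hγ, hxS⟩
    simp only [Set.mem_singleton_iff] at hγ
    subst hγ
    refine ⟨hdt0, ?_, by rw [hRdef]; simp [lt_add_one]⟩
    rw [hQeq 0 x]
    have h3 : x ⬝ᵥ ((B + (0:ℝ) • C)⁻¹ * A).mulVec x = g x := by rw [hB0]
    rw [h3]
    have h4 : c₀ ≤ g x := hx₀min hxS
    linarith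
  obtain ⟨u, v, huo, hvo, h0u, hSv, huv⟩ :=
    generalized_tube_lemma isCompact_singleton hScompact hOopen hsub
  obtain ⟨ε, hεpos, hball⟩ := Metric.isOpen_iff.1 huo 0 (h0u rfl)
  refine ⟨ε / 2, by positivity, c, hcpos, R, hR1, ?_⟩
  intro γ hγ0 hγε
  have hγu : γ ∈ u := by
    apply hball
    rw [mem_ball, Real.dist_eq, sub_zero, abs_of_nonneg hγ0]
    linarith
  have hmemO : ∀ x ∈ S, (γ, x) ∈ O := fun x hx => huv ⟨hγu, hSv hx⟩
  have hdtγ : dt γ ≠ 0 := (hmemO x₀ hx₀S).1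
  refine ⟨?_, ?_, ?_⟩
  · rw [Matrix.isUnit_iff_isUnit_det, isUnit_iff_ne_zero]
    exact hdtγ
  · intro x
    by_cases hx0 : euclNorm x = 0
    · have hsum0 : ∑ i, (x i) ^ 2 = 0 := by
        have := euclNorm_sq x
        rw [hx0] at this
        simpa using this.symm
      have hx0' : x = 0 := by
        funext i
        have h5 : (x i) ^ 2 ≤ 0 := hsum0 ▸ Finset.single_le_sum
          (f := fun j => (x j) ^ 2) (fun _ _ => sq_nonneg _) (Finset.mem_univ i)
        have := sq_nonneg (x i)
        have : (x i) ^ 2 = 0 := le_antisymm h5 this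
        exact pow_eq_zero_iff (by norm_num) |>.1 this
      rw [hx0']
      simp
    · set t : ℝ := euclNorm x with htdef
      have htnn : 0 ≤ t := Real.sqrt_nonneg _
      have htpos : 0 < t := lt_of_le_of_ne htnn (Ne.symm hx0)
      set y : Fin M → ℝ := t⁻¹ • x with hydef
      have hyS : y ∈ S := by
        show euclNorm y = 1
        rw [hydef, euclNorm_smul, abs_of_pos (by positivity), ← htdef]
        field_simp
      have hxy : x = t • y := by
        rw [hydef, smul_smul]
        rw [mul_inv_cancel₀ htpos.ne', one_smul]
      have hQy : c < Q (γ, y) := (hmemO y hyS).2.1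
      rw [hQeq γ y] at hQy
      have hform : x ⬝ᵥ ((B + γ • C)⁻¹ * A).mulVec x
          = t ^ 2 * (y ⬝ᵥ ((B + γ • C)⁻¹ * A).mulVec y) := by
        rw [hxy, smul_dotProduct, Matrix.mulVec_smul, dotProduct_smul]
        simp [smul_eq_mul]; ring
      have hsumt : ∑ i, (x i) ^ 2 = t ^ 2 := (euclNorm_sq x).symm
      rw [hform, hsumt]
      have ht2 : 0 < t ^ 2 := by positivity
      nlinarith
  · have h6 := (hmemO x₀ hx₀S).2.2
    rw [hNreq γ] at h6
    linarith



lemma abs_le_half_add_sq (a b : ℝ) : |a * b| ≤ (a ^ 2 + b ^ 2) / 2 := by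
  rw [abs_mul]
  nlinarith [sq_nonneg (|a| - |b|), sq_abs a, sq_abs b, abs_nonneg a, abs_nonneg b]

lemma abs_le_one_add_sq (a : ℝ) : |a| ≤ 1 + a ^ 2 := by
  nlinarith [sq_nonneg (|a| - 1), sq_abs a, abs_nonneg a]

lemma abs_integral_mul_le {Ω' : Type*} [MeasurableSpace Ω'] (P : Measure Ω')
    (X Y : Ω' → ℝ) (hX2 : Integrable (fun ω => X ω ^ 2) P)
    (hY2 : Integrable (fun ω => Y ω ^ 2) P)
    (hXY : Integrable (fun ω => X ω * Y ω) P) :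
    |∫ ω, X ω * Y ω ∂P| ≤ ((∫ ω, X ω ^ 2 ∂P) + ∫ ω, Y ω ^ 2 ∂P) / 2 := by
  have h1 : |∫ ω, X ω * Y ω ∂P| ≤ ∫ ω, |X ω * Y ω| ∂P := by
    have := norm_integral_le_integral_norm (μ := P) (fun ω => X ω * Y ω)
    simpa only [Real.norm_eq_abs] using this
  have h2 : ∫ ω, |X ω * Y ω| ∂P ≤ ∫ ω, (X ω ^ 2 + Y ω ^ 2) / 2 ∂P :=
    integral_mono hXY.abs ((hX2.add hY2).div_const 2) fun ω => abs_le_half_add_sq _ _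
  have h3 : ∫ ω, (X ω ^ 2 + Y ω ^ 2) / 2 ∂P
      = ((∫ ω, X ω ^ 2 ∂P) + ∫ ω, Y ω ^ 2 ∂P) / 2 := by
    rw [integral_div, integral_add hX2 hY2]
  linarith

lemma abs_integral_le_one_add_sq {Ω' : Type*} [MeasurableSpace Ω'] (P : Measure Ω')
    [IsProbabilityMeasure P] (X : Ω' → ℝ) (hX : Integrable X P)
    (hX2 : Integrable (fun ω => X ω ^ 2) P) :
    |∫ ω, X ω ∂P| ≤ 1 + ∫ ω, X ω ^ 2 ∂P := by
  have h1 : |∫ ω, X ω ∂P| ≤ ∫ ω, |X ω| ∂P := by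
    have := norm_integral_le_integral_norm (μ := P) X
    simpa only [Real.norm_eq_abs] using this
  have h2 : ∫ ω, |X ω| ∂P ≤ ∫ ω, (1 + X ω ^ 2) ∂P :=
    integral_mono hX.abs ((integrable_const 1).add hX2) fun ω => abs_le_one_add_sq _
  have h3 : ∫ ω, (1 + X ω ^ 2) ∂P = 1 + ∫ ω, X ω ^ 2 ∂P := by
    rw [integral_add (integrable_const 1) hX2, integral_const]
    simp
  linarith

lemma abs_comb4 (a b c d : ℝ) : |a - b - c + d| ≤ |a| + |b| + |c| + |d| := by
  have h1 := abs_add_le (a - b - c) d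
  have h2 := abs_add_le (a - b) (-c)
  rw [abs_neg, ← sub_eq_add_neg] at h2
  have h3 := abs_add_le a (-b)
  rw [abs_neg, ← sub_eq_add_neg] at h3
  linarith

lemma abs_add4 (a b c d : ℝ) : |a + b + c + d| ≤ |a| + |b| + |c| + |d| := by
  have h1 := abs_add_le (a + b + c) d
  have h2 := abs_add_le (a + b) c
  have h3 := abs_add_le a b
  linarith

lemma key_step {M : ℕ} {Ω' : Type} [MeasurableSpace Ω'] (P : Measure Ω')
    [IsProbabilityMeasure P]
    (A Ψ : Matrix (Fin M) (Fin M) ℝ) (uhat : Fin M → ℝ)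
    (c R SA σθθ2 σΩθ2 σΩΩ2 mu : ℝ)
    (hc : 0 < c) (hR : 1 ≤ R) (hmu : 0 < mu)
    (hSA : ∑ l, ∑ j, (A l j) ^ 2 ≤ SA)
    (hΨ : ∑ i, ∑ j, (Ψ i j) ^ 2 ≤ R)
    (hquad : ∀ x : Fin M → ℝ, c * (∑ i, x i ^ 2) ≤ x ⬝ᵥ (Ψ * A).mulVec x)
    (hmuR2 : mu * (R * SA + 1) ≤ c)
    (hσθθ : 0 ≤ σθθ2) (hσΩθ : 0 ≤ σΩθ2) (hσΩΩ : 0 ≤ σΩΩ2)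
    (Th : Ω' → Fin M → ℝ) (Wk : Ω' → Matrix (Fin M) (Fin M) ℝ)
    (e' ek : Ω' → Fin M → ℝ)
    (hrel : ∀ ω, ek ω = (1 - mu • (Ψ * (A + Wk ω))).mulVec (e' ω)
        + mu • Ψ.mulVec (Th ω - (Wk ω).mulVec uhat))
    (hInd : IndepFun (fun ω => (Th ω, Wk ω)) e' P)
    (hThI : ∀ b, Integrable (fun ω => Th ω b) P)
    (hWkI : ∀ b cc, Integrable (fun ω => Wk ω b cc) P)
    (he'I : ∀ jj, Integrable (fun ω => e' ω jj) P)
    (hee'I : ∀ cc cc', Integrable (fun ω => e' ω cc * e' ω cc') P)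
    (hθθI : ∀ b b', Integrable (fun ω => Th ω b * Th ω b') P)
    (hWWI : ∀ b cc b' cc', Integrable (fun ω => Wk ω b cc * Wk ω b' cc') P)
    (hWθI : ∀ b cc b', Integrable (fun ω => Wk ω b cc * Th ω b') P)
    (hθ0 : ∀ b, ∫ ω, Th ω b ∂P = 0)
    (hW0 : ∀ b cc, ∫ ω, Wk ω b cc ∂P = 0)
    (hθθb : ∀ b b', |∫ ω, Th ω b * Th ω b' ∂P| ≤ σθθ2)
    (hWθb : ∀ b cc b', |∫ ω, Wk ω b cc * Th ω b' ∂P| ≤ σΩθ2)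
    (hWWb : ∀ b cc b' cc', |∫ ω, Wk ω b cc * Wk ω b' cc' ∂P| ≤ σΩΩ2) :
    ∑ i, ∫ ω, (ek ω i) ^ 2 ∂P ≤ (1 - c * mu) * (∑ i, ∫ ω, (e' ω i) ^ 2 ∂P)
      + (M : ℝ) ^ 3 * R *
        (σθθ2 + 2 * (M : ℝ) * σΩθ2 * ((1 + ∑ cc, |uhat cc|) + 1)
          + (M : ℝ) ^ 2 * σΩΩ2 * ((1 + ∑ cc, |uhat cc|) + 1) ^ 2) * mu ^ 2 *
        (1 + ∑ i, ∫ ω, (e' ω i) ^ 2 ∂P) := by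
  classical
  set U : ℝ := 1 + ∑ cc, |uhat cc| with hUdef
  clear_value U
  have hU1 : 1 ≤ U := by
    rw [hUdef]
    have : (0:ℝ) ≤ ∑ cc, |uhat cc| := Finset.sum_nonneg fun _ _ => abs_nonneg _
    linarith
  set Kξ : ℝ := σθθ2 + 2 * (M : ℝ) * σΩθ2 * (U + 1) + (M : ℝ) ^ 2 * σΩΩ2 * (U + 1) ^ 2
    with hKξdef
  clear_value Kξ
  have hKξnn : 0 ≤ Kξ := by
    rw [hKξdef]
    have h1 : (0:ℝ) ≤ (M : ℝ) := Nat.cast_nonneg _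
    have h2 : (0:ℝ) ≤ U + 1 := by linarith
    positivity
  set f' : ℝ := ∑ i, ∫ ω, (e' ω i) ^ 2 ∂P with hf'def
  clear_value f'
  have he'sqI : ∀ cc, Integrable (fun ω => (e' ω cc) ^ 2) P := by
    intro cc
    have : (fun ω => (e' ω cc) ^ 2) = fun ω => e' ω cc * e' ω cc := by
      funext ω; ring
    rw [this]; exact hee'I cc cc
  have hf'nn : 0 ≤ f' := by
    rw [hf'def]
    exact Finset.sum_nonneg fun i _ => integral_nonneg fun ω => sq_nonneg _
  have hsq_le_f' : ∀ cc, ∫ ω, (e' ω cc) ^ 2 ∂P ≤ f' := by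
    intro cc
    rw [hf'def]
    exact Finset.single_le_sum (f := fun i => ∫ ω, (e' ω i) ^ 2 ∂P)
      (fun i _ => integral_nonneg fun ω => sq_nonneg _) (Finset.mem_univ cc)
  -- expectation bounds on e'
  have hm : ∀ cc, |∫ ω, e' ω cc ∂P| ≤ 1 + f' := by
    intro cc
    have := abs_integral_le_one_add_sq P (fun ω => e' ω cc) (he'I cc) (he'sqI cc)
    have h2 := hsq_le_f' cc
    linarith
  have hD : ∀ cc cc', |∫ ω, e' ω cc * e' ω cc' ∂P| ≤ f' := by
    intro cc cc'
    have := abs_integral_mul_le P (fun ω => e' ω cc) (fun ω => e' ω cc')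
      (he'sqI cc) (he'sqI cc') (hee'I cc cc')
    have h2 := hsq_le_f' cc
    have h3 := hsq_le_f' cc'
    linarith
  -- independence helper
  have hmθ : ∀ b, Measurable
      (fun p : (Fin M → ℝ) × Matrix (Fin M) (Fin M) ℝ => p.1 b) :=
    fun b => (measurable_pi_apply b).comp measurable_fst
  have hmW : ∀ b cc, Measurable
      (fun p : (Fin M → ℝ) × Matrix (Fin M) (Fin M) ℝ => p.2 b cc) :=
    fun b cc => (measurable_pi_apply cc).comp
      ((measurable_pi_apply b).comp (measurable_snd : Measurable (fun p : (Fin M → ℝ) × Matrix (Fin M) (Fin M) ℝ => p.2)))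
  have hprod : ∀ (g : (Fin M → ℝ) × Matrix (Fin M) (Fin M) ℝ → ℝ)
      (h : (Fin M → ℝ) → ℝ), Measurable g → Measurable h →
      Integrable (fun ω => g (Th ω, Wk ω)) P → Integrable (fun ω => h (e' ω)) P →
      Integrable (fun ω => g (Th ω, Wk ω) * h (e' ω)) P ∧
        ∫ ω, g (Th ω, Wk ω) * h (e' ω) ∂P
          = (∫ ω, g (Th ω, Wk ω) ∂P) * ∫ ω, h (e' ω) ∂P := by
    intro g h hg hh hgi hhi
    have h1 : IndepFun (fun ω => g (Th ω, Wk ω)) (fun ω => h (e' ω)) P :=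
      hInd.comp hg hh
    exact ⟨h1.integrable_mul hgi hhi,
      h1.integral_fun_mul_eq_mul_integral hgi.aestronglyMeasurable hhi.aestronglyMeasurable⟩
  -- the noise vector ξ
  set ξ : Ω' → Fin M → ℝ :=
    fun ω => Th ω - (Wk ω).mulVec (uhat + e' ω) with hξdef
  have hξapp : ∀ ω b, ξ ω b = Th ω b - ∑ cc, Wk ω b cc * (uhat cc + e' ω cc) := by
    intro ω b
    rw [hξdef]
    simp [Matrix.mulVec, dotProduct]
  set G : Matrix (Fin M) (Fin M) ℝ := 1 - mu • (Ψ * A) with hGdef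
  have hdec : ∀ ω, ek ω = G.mulVec (e' ω) + mu • Ψ.mulVec (ξ ω) := by
    intro ω
    rw [hrel ω, hGdef, hξdef]
    simp only [Matrix.mul_add, Matrix.sub_mulVec, Matrix.add_mulVec, Matrix.one_mulVec,
      Matrix.smul_mulVec, Matrix.mulVec_sub, Matrix.mulVec_add,
      ← Matrix.mulVec_mulVec, smul_add, smul_sub]
    abel
  set uu : Ω' → Fin M → ℝ := fun ω i => ∑ jj, G i jj * e' ω jj with huudef
  set wwf : Ω' → Fin M → ℝ := fun ω i => ∑ b, Ψ i b * ξ ω b with hwwdef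
  have hdeci : ∀ ω i, ek ω i = uu ω i + mu * wwf ω i := by
    intro ω i
    rw [hdec ω]
    simp [Matrix.mulVec, dotProduct]
    rfl
  -- integrability of uu products
  have hexp_uu : ∀ i ω, uu ω i * uu ω i
      = ∑ jj, ∑ jj', (G i jj * G i jj') * (e' ω jj * e' ω jj') := by
    intro i ω
    rw [huudef]
    rw [Finset.sum_mul_sum]
    exact Finset.sum_congr rfl fun jj _ => Finset.sum_congr rfl fun jj' _ => by ring
  have hint_uu2 : ∀ i, Integrable (fun ω => uu ω i * uu ω i) P := by
    intro i
    have : (fun ω => uu ω i * uu ω i)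
        = fun ω => ∑ jj, ∑ jj', (G i jj * G i jj') * (e' ω jj * e' ω jj') :=
      funext fun ω => hexp_uu i ω
    rw [this]
    exact integrable_finset_sum _ fun jj _ => integrable_finset_sum _ fun jj' _ =>
      (hee'I jj jj').const_mul _
  -- ξ against e' : zero mean cross terms
  have hint_ξe : ∀ b jj, Integrable (fun ω => ξ ω b * e' ω jj) P ∧
      ∫ ω, ξ ω b * e' ω jj ∂P = 0 := by
    intro b jj
    have hptw : (fun ω => ξ ω b * e' ω jj) = fun ω => Th ω b * e' ω jj
        - ∑ cc, Wk ω b cc * ((uhat cc + e' ω cc) * e' ω jj) := by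
      funext ω
      rw [hξapp ω b, sub_mul, Finset.sum_mul]
      congr 1
      exact Finset.sum_congr rfl fun cc _ => by ring
    have h1 := hprod (fun p => p.1 b) (fun v => v jj) (hmθ b) (measurable_pi_apply jj)
      (hThI b) (he'I jj)
    have h2 : ∀ cc : Fin M, Integrable
        (fun ω => Wk ω b cc * ((uhat cc + e' ω cc) * e' ω jj)) P ∧
        ∫ ω, Wk ω b cc * ((uhat cc + e' ω cc) * e' ω jj) ∂P
          = (∫ ω, Wk ω b cc ∂P) * ∫ ω, (uhat cc + e' ω cc) * e' ω jj ∂P := by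
      intro cc
      have hhi : Integrable (fun ω => (uhat cc + e' ω cc) * e' ω jj) P := by
        have : (fun ω => (uhat cc + e' ω cc) * e' ω jj)
            = fun ω => uhat cc * e' ω jj + e' ω cc * e' ω jj := by
          funext ω; ring
        rw [this]
        exact ((he'I jj).const_mul _).add (hee'I cc jj)
      exact hprod (fun p => p.2 b cc) (fun v => (uhat cc + v cc) * v jj) (hmW b cc)
        ((measurable_const.add (measurable_pi_apply cc)).mul (measurable_pi_apply jj))
        (hWkI b cc) hhi
    constructor
    · rw [hptw]
      exact (h1.1).sub (integrable_finset_sum _ fun cc _ => (h2 cc).1)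
    · rw [hptw, integral_sub (h1.1) (integrable_finset_sum _ fun cc _ => (h2 cc).1),
        integral_finset_sum _ fun cc _ => (h2 cc).1]
      rw [h1.2, hθ0 b]
      have : ∀ cc : Fin M, ∫ ω, Wk ω b cc * ((uhat cc + e' ω cc) * e' ω jj) ∂P = 0 := by
        intro cc
        rw [(h2 cc).2, hW0 b cc, zero_mul]
      rw [Finset.sum_congr rfl fun cc _ => this cc]
      simp
  -- cross term uu * ww has zero mean
  have hint_uw : ∀ i, Integrable (fun ω => uu ω i * wwf ω i) P ∧
      ∫ ω, uu ω i * wwf ω i ∂P = 0 := by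
    intro i
    have hptw : (fun ω => uu ω i * wwf ω i)
        = fun ω => ∑ jj, ∑ b, (G i jj * Ψ i b) * (ξ ω b * e' ω jj) := by
      funext ω
      rw [huudef, hwwdef]
      rw [Finset.sum_mul_sum]
      exact Finset.sum_congr rfl fun jj _ => Finset.sum_congr rfl fun b _ => by ring
    constructor
    · rw [hptw]
      exact integrable_finset_sum _ fun jj _ => integrable_finset_sum _ fun b _ =>
        ((hint_ξe b jj).1).const_mul _
    · rw [hptw, integral_finset_sum _ fun jj _ => integrable_finset_sum _ fun b _ =>
        ((hint_ξe b jj).1).const_mul _]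
      have : ∀ jj : Fin M, ∫ ω, ∑ b, (G i jj * Ψ i b) * (ξ ω b * e' ω jj) ∂P = 0 := by
        intro jj
        rw [integral_finset_sum _ fun b _ => ((hint_ξe b jj).1).const_mul _]
        have : ∀ b : Fin M, ∫ ω, (G i jj * Ψ i b) * (ξ ω b * e' ω jj) ∂P = 0 := by
          intro b
          rw [integral_const_mul, (hint_ξe b jj).2, mul_zero]
        rw [Finset.sum_congr rfl fun b _ => this b]
        simp
      rw [Finset.sum_congr rfl fun jj _ => this jj]
      simp
  -- second moments of ξ
  have hyy : ∀ cc cc' : Fin M, Integrable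
      (fun ω => (uhat cc + e' ω cc) * (uhat cc' + e' ω cc')) P ∧
      |∫ ω, (uhat cc + e' ω cc) * (uhat cc' + e' ω cc') ∂P| ≤ (U + 1) ^ 2 * (1 + f') := by
    intro cc cc'
    have hptw : (fun ω => (uhat cc + e' ω cc) * (uhat cc' + e' ω cc'))
        = fun ω => uhat cc * uhat cc' + uhat cc * e' ω cc'
          + e' ω cc * uhat cc' + e' ω cc * e' ω cc' := by
      funext ω; ring
    have hI1 : Integrable (fun ω => uhat cc * e' ω cc') P := (he'I cc').const_mul _
    have hI2 : Integrable (fun ω => e' ω cc * uhat cc') P := (he'I cc).mul_const _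
    constructor
    · rw [hptw]
      exact (((integrable_const _).add hI1).add hI2).add (hee'I cc cc')
    · have hIa : Integrable (fun ω => uhat cc * uhat cc' + uhat cc * e' ω cc'
          + e' ω cc * uhat cc') P := ((integrable_const _).add hI1).add hI2
      have hIb : Integrable (fun ω => uhat cc * uhat cc' + uhat cc * e' ω cc') P :=
        (integrable_const _).add hI1
      have hval : ∫ ω, (uhat cc + e' ω cc) * (uhat cc' + e' ω cc') ∂P
          = uhat cc * uhat cc' + uhat cc * (∫ ω, e' ω cc' ∂P)
            + (∫ ω, e' ω cc ∂P) * uhat cc' + ∫ ω, e' ω cc * e' ω cc' ∂P := by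
        rw [hptw, integral_add hIa (hee'I cc cc'), integral_add hIb hI2,
          integral_add (integrable_const _) hI1, integral_const]
        simp [integral_const_mul, integral_mul_const]
      rw [hval]
      have hu : ∀ dd, |uhat dd| ≤ U - 1 := by
        intro dd
        have : |uhat dd| ≤ ∑ cc'', |uhat cc''| :=
          Finset.single_le_sum (f := fun dd => |uhat dd|)
            (fun _ _ => abs_nonneg _) (Finset.mem_univ dd)
        rw [hUdef]; linarith
      have h1 := hu cc
      have h2 := hu cc'
      have h3 := hm cc
      have h4 := hm cc'
      have h5 := hD cc cc'
      have habs : |uhat cc * uhat cc' + uhat cc * (∫ ω, e' ω cc' ∂P)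
          + (∫ ω, e' ω cc ∂P) * uhat cc' + ∫ ω, e' ω cc * e' ω cc' ∂P|
          ≤ (U-1)*(U-1) + (U-1)*(1+f') + (1+f')*(U-1) + f' := by
        have t1 : |uhat cc * uhat cc'| ≤ (U-1)*(U-1) := by
          rw [abs_mul]
          exact mul_le_mul h1 h2 (abs_nonneg _) (by linarith)
        have t2 : |uhat cc * (∫ ω, e' ω cc' ∂P)| ≤ (U-1)*(1+f') := by
          rw [abs_mul]
          exact mul_le_mul h1 h4 (abs_nonneg _) (by linarith)
        have t3 : |(∫ ω, e' ω cc ∂P) * uhat cc'| ≤ (1+f')*(U-1) := by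
          rw [abs_mul]
          exact mul_le_mul h3 h2 (abs_nonneg _) (by linarith)
        have h0 := abs_add4 (uhat cc * uhat cc') (uhat cc * (∫ ω, e' ω cc' ∂P))
          ((∫ ω, e' ω cc ∂P) * uhat cc') (∫ ω, e' ω cc * e' ω cc' ∂P)
        linarith
      have hgrow : (U-1)*(U-1) + (U-1)*(1+f') + (1+f')*(U-1) + f'
          ≤ (U + 1) ^ 2 * (1 + f') := by nlinarith [hf'nn, hU1]
      linarith
  have hWθI' : ∀ b b' cc', Integrable (fun ω => Th ω b * Wk ω b' cc') P := by
    intro b b' cc'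
    have : (fun ω => Th ω b * Wk ω b' cc') = fun ω => Wk ω b' cc' * Th ω b := by
      funext ω; ring
    rw [this]; exact hWθI b' cc' b
  have hWθb' : ∀ b b' cc', |∫ ω, Th ω b * Wk ω b' cc' ∂P| ≤ σΩθ2 := by
    intro b b' cc'
    have : (fun ω => Th ω b * Wk ω b' cc') = fun ω => Wk ω b' cc' * Th ω b := by
      funext ω; ring
    rw [this]; exact hWθb b' cc' b
  have hyint : ∀ cc, Integrable (fun ω => uhat cc + e' ω cc) P :=
    fun cc => (integrable_const _).add (he'I cc)
  have hyval : ∀ cc, ∫ ω, (uhat cc + e' ω cc) ∂P = uhat cc + ∫ ω, e' ω cc ∂P := by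
    intro cc
    rw [integral_add (integrable_const _) (he'I cc), integral_const]
    simp
  have hybnd : ∀ cc, |uhat cc + ∫ ω, e' ω cc ∂P| ≤ (U + 1) * (1 + f') := by
    intro cc
    have hu : |uhat cc| ≤ U - 1 := by
      have : |uhat cc| ≤ ∑ cc'', |uhat cc''| :=
        Finset.single_le_sum (f := fun dd => |uhat dd|)
          (fun _ _ => abs_nonneg _) (Finset.mem_univ cc)
      rw [hUdef]; linarith
    have h3 := hm cc
    have := abs_add_le (uhat cc) (∫ ω, e' ω cc ∂P)
    nlinarith [hf'nn, hU1]
  have hξξ : ∀ b b', Integrable (fun ω => ξ ω b * ξ ω b') P ∧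
      |∫ ω, ξ ω b * ξ ω b' ∂P| ≤ Kξ * (1 + f') := by
    intro b b'
    have hptw : (fun ω => ξ ω b * ξ ω b') = fun ω =>
        Th ω b * Th ω b'
        - (∑ cc', (Th ω b * Wk ω b' cc') * (uhat cc' + e' ω cc'))
        - (∑ cc, (Wk ω b cc * Th ω b') * (uhat cc + e' ω cc))
        + ∑ cc, ∑ cc', (Wk ω b cc * Wk ω b' cc')
            * ((uhat cc + e' ω cc) * (uhat cc' + e' ω cc')) := by
      funext ω
      rw [hξapp ω b, hξapp ω b']
      have e1 : Th ω b * (∑ cc', Wk ω b' cc' * (uhat cc' + e' ω cc'))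
          = ∑ cc', (Th ω b * Wk ω b' cc') * (uhat cc' + e' ω cc') := by
        rw [Finset.mul_sum]
        exact Finset.sum_congr rfl fun cc' _ => by ring
      have e2 : (∑ cc, Wk ω b cc * (uhat cc + e' ω cc)) * Th ω b'
          = ∑ cc, (Wk ω b cc * Th ω b') * (uhat cc + e' ω cc) := by
        rw [Finset.sum_mul]
        exact Finset.sum_congr rfl fun cc _ => by ring
      have e3 : (∑ cc, Wk ω b cc * (uhat cc + e' ω cc))
            * (∑ cc', Wk ω b' cc' * (uhat cc' + e' ω cc'))
          = ∑ cc, ∑ cc', (Wk ω b cc * Wk ω b' cc')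
            * ((uhat cc + e' ω cc) * (uhat cc' + e' ω cc')) := by
        rw [Finset.sum_mul_sum]
        exact Finset.sum_congr rfl fun cc _ => Finset.sum_congr rfl fun cc' _ => by ring
      calc (Th ω b - ∑ cc, Wk ω b cc * (uhat cc + e' ω cc))
            * (Th ω b' - ∑ cc', Wk ω b' cc' * (uhat cc' + e' ω cc'))
          = Th ω b * Th ω b'
            - Th ω b * (∑ cc', Wk ω b' cc' * (uhat cc' + e' ω cc'))
            - (∑ cc, Wk ω b cc * (uhat cc + e' ω cc)) * Th ω b'
            + (∑ cc, Wk ω b cc * (uhat cc + e' ω cc))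
              * (∑ cc', Wk ω b' cc' * (uhat cc' + e' ω cc')) := by ring
        _ = _ := by rw [e1, e2, e3]
    have ht2 : ∀ cc' : Fin M, Integrable
        (fun ω => (Th ω b * Wk ω b' cc') * (uhat cc' + e' ω cc')) P ∧
        ∫ ω, (Th ω b * Wk ω b' cc') * (uhat cc' + e' ω cc') ∂P
          = (∫ ω, Th ω b * Wk ω b' cc' ∂P) * ∫ ω, (uhat cc' + e' ω cc') ∂P :=
      fun cc' => hprod (fun p => p.1 b * p.2 b' cc') (fun v => uhat cc' + v cc')
        ((hmθ b).mul (hmW b' cc')) (measurable_const.add (measurable_pi_apply cc'))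
        (hWθI' b b' cc') (hyint cc')
    have ht3 : ∀ cc : Fin M, Integrable
        (fun ω => (Wk ω b cc * Th ω b') * (uhat cc + e' ω cc)) P ∧
        ∫ ω, (Wk ω b cc * Th ω b') * (uhat cc + e' ω cc) ∂P
          = (∫ ω, Wk ω b cc * Th ω b' ∂P) * ∫ ω, (uhat cc + e' ω cc) ∂P :=
      fun cc => hprod (fun p => p.2 b cc * p.1 b') (fun v => uhat cc + v cc)
        ((hmW b cc).mul (hmθ b')) (measurable_const.add (measurable_pi_apply cc))
        (hWθI b cc b') (hyint cc)
    have ht4 : ∀ (cc cc' : Fin M), Integrable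
        (fun ω => (Wk ω b cc * Wk ω b' cc')
          * ((uhat cc + e' ω cc) * (uhat cc' + e' ω cc'))) P ∧
        ∫ ω, (Wk ω b cc * Wk ω b' cc')
            * ((uhat cc + e' ω cc) * (uhat cc' + e' ω cc')) ∂P
          = (∫ ω, Wk ω b cc * Wk ω b' cc' ∂P)
            * ∫ ω, (uhat cc + e' ω cc) * (uhat cc' + e' ω cc') ∂P :=
      fun cc cc' => hprod (fun p => p.2 b cc * p.2 b' cc')
        (fun v => (uhat cc + v cc) * (uhat cc' + v cc'))
        ((hmW b cc).mul (hmW b' cc'))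
        ((measurable_const.add (measurable_pi_apply cc)).mul
          (measurable_const.add (measurable_pi_apply cc')))
        (hWWI b cc b' cc') (hyy cc cc').1
    have hI2 : Integrable (fun ω => ∑ cc', (Th ω b * Wk ω b' cc')
        * (uhat cc' + e' ω cc')) P := integrable_finset_sum _ fun cc' _ => (ht2 cc').1
    have hI3 : Integrable (fun ω => ∑ cc, (Wk ω b cc * Th ω b')
        * (uhat cc + e' ω cc)) P := integrable_finset_sum _ fun cc _ => (ht3 cc).1
    have hI4 : Integrable (fun ω => ∑ cc, ∑ cc', (Wk ω b cc * Wk ω b' cc')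
        * ((uhat cc + e' ω cc) * (uhat cc' + e' ω cc'))) P :=
      integrable_finset_sum _ fun cc _ => integrable_finset_sum _ fun cc' _ =>
        (ht4 cc cc').1
    constructor
    · rw [hptw]
      exact (((hθθI b b').sub hI2).sub hI3).add hI4
    · have hval : ∫ ω, ξ ω b * ξ ω b' ∂P
          = (∫ ω, Th ω b * Th ω b' ∂P)
            - (∑ cc', ∫ ω, (Th ω b * Wk ω b' cc') * (uhat cc' + e' ω cc') ∂P)
            - (∑ cc, ∫ ω, (Wk ω b cc * Th ω b') * (uhat cc + e' ω cc) ∂P)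
            + ∑ cc, ∑ cc', ∫ ω, (Wk ω b cc * Wk ω b' cc')
                * ((uhat cc + e' ω cc) * (uhat cc' + e' ω cc')) ∂P := by
        have hIa : Integrable (fun ω => Th ω b * Th ω b'
            - (∑ cc', (Th ω b * Wk ω b' cc') * (uhat cc' + e' ω cc'))
            - (∑ cc, (Wk ω b cc * Th ω b') * (uhat cc + e' ω cc))) P :=
          ((hθθI b b').sub hI2).sub hI3
        have hIb : Integrable (fun ω => Th ω b * Th ω b'
            - (∑ cc', (Th ω b * Wk ω b' cc') * (uhat cc' + e' ω cc'))) P :=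
          (hθθI b b').sub hI2
        rw [hptw]
        rw [integral_add hIa hI4, integral_sub hIb hI3, integral_sub (hθθI b b') hI2,
          integral_finset_sum _ fun cc' _ => (ht2 cc').1,
          integral_finset_sum _ fun cc _ => (ht3 cc).1,
          integral_finset_sum _ fun cc _ => integrable_finset_sum _ fun cc' _ =>
            (ht4 cc cc').1]
        congr 1
        exact Finset.sum_congr rfl fun cc _ =>
          integral_finset_sum _ fun cc' _ => (ht4 cc cc').1
      rw [hval]
      have hb2 : ∀ cc' : Fin M, |∫ ω, (Th ω b * Wk ω b' cc')
          * (uhat cc' + e' ω cc') ∂P| ≤ σΩθ2 * ((U + 1) * (1 + f')) := by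
        intro cc'
        rw [(ht2 cc').2, hyval cc', abs_mul]
        exact mul_le_mul (hWθb' b b' cc') (hybnd cc') (abs_nonneg _) hσΩθ
      have hb3 : ∀ cc : Fin M, |∫ ω, (Wk ω b cc * Th ω b')
          * (uhat cc + e' ω cc) ∂P| ≤ σΩθ2 * ((U + 1) * (1 + f')) := by
        intro cc
        rw [(ht3 cc).2, hyval cc, abs_mul]
        exact mul_le_mul (hWθb b cc b') (hybnd cc) (abs_nonneg _) hσΩθ
      have hb4 : ∀ cc cc' : Fin M, |∫ ω, (Wk ω b cc * Wk ω b' cc')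
          * ((uhat cc + e' ω cc) * (uhat cc' + e' ω cc')) ∂P|
          ≤ σΩΩ2 * ((U + 1) ^ 2 * (1 + f')) := by
        intro cc cc'
        rw [(ht4 cc cc').2, abs_mul]
        exact mul_le_mul (hWWb b cc b' cc') (hyy cc cc').2 (abs_nonneg _) hσΩΩ
      have hs2 : |∑ cc', ∫ ω, (Th ω b * Wk ω b' cc') * (uhat cc' + e' ω cc') ∂P|
          ≤ (M:ℝ) * (σΩθ2 * ((U + 1) * (1 + f'))) := by
        calc |∑ cc', ∫ ω, (Th ω b * Wk ω b' cc') * (uhat cc' + e' ω cc') ∂P|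
            ≤ ∑ cc', |∫ ω, (Th ω b * Wk ω b' cc') * (uhat cc' + e' ω cc') ∂P| :=
              Finset.abs_sum_le_sum_abs _ _
          _ ≤ ∑ _cc' : Fin M, σΩθ2 * ((U + 1) * (1 + f')) :=
              Finset.sum_le_sum fun cc' _ => hb2 cc'
          _ = (M:ℝ) * (σΩθ2 * ((U + 1) * (1 + f'))) := by
              rw [Finset.sum_const, Finset.card_univ, Fintype.card_fin, nsmul_eq_mul]
      have hs3 : |∑ cc, ∫ ω, (Wk ω b cc * Th ω b') * (uhat cc + e' ω cc) ∂P|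
          ≤ (M:ℝ) * (σΩθ2 * ((U + 1) * (1 + f'))) := by
        calc |∑ cc, ∫ ω, (Wk ω b cc * Th ω b') * (uhat cc + e' ω cc) ∂P|
            ≤ ∑ cc, |∫ ω, (Wk ω b cc * Th ω b') * (uhat cc + e' ω cc) ∂P| :=
              Finset.abs_sum_le_sum_abs _ _
          _ ≤ ∑ _cc : Fin M, σΩθ2 * ((U + 1) * (1 + f')) :=
              Finset.sum_le_sum fun cc _ => hb3 cc
          _ = (M:ℝ) * (σΩθ2 * ((U + 1) * (1 + f'))) := by
              rw [Finset.sum_const, Finset.card_univ, Fintype.card_fin, nsmul_eq_mul]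
      have hs4 : |∑ cc, ∑ cc', ∫ ω, (Wk ω b cc * Wk ω b' cc')
            * ((uhat cc + e' ω cc) * (uhat cc' + e' ω cc')) ∂P|
          ≤ (M:ℝ) * ((M:ℝ) * (σΩΩ2 * ((U + 1) ^ 2 * (1 + f')))) := by
        calc |∑ cc, ∑ cc', ∫ ω, (Wk ω b cc * Wk ω b' cc')
              * ((uhat cc + e' ω cc) * (uhat cc' + e' ω cc')) ∂P|
            ≤ ∑ cc, |∑ cc', ∫ ω, (Wk ω b cc * Wk ω b' cc')
              * ((uhat cc + e' ω cc) * (uhat cc' + e' ω cc')) ∂P| :=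
              Finset.abs_sum_le_sum_abs _ _
          _ ≤ ∑ _cc : Fin M, (M:ℝ) * (σΩΩ2 * ((U + 1) ^ 2 * (1 + f'))) := by
              apply Finset.sum_le_sum
              intro cc _
              calc |∑ cc', ∫ ω, (Wk ω b cc * Wk ω b' cc')
                    * ((uhat cc + e' ω cc) * (uhat cc' + e' ω cc')) ∂P|
                  ≤ ∑ cc', |∫ ω, (Wk ω b cc * Wk ω b' cc')
                    * ((uhat cc + e' ω cc) * (uhat cc' + e' ω cc')) ∂P| :=
                    Finset.abs_sum_le_sum_abs _ _
                _ ≤ ∑ _cc' : Fin M, σΩΩ2 * ((U + 1) ^ 2 * (1 + f')) :=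
                    Finset.sum_le_sum fun cc' _ => hb4 cc cc'
                _ = (M:ℝ) * (σΩΩ2 * ((U + 1) ^ 2 * (1 + f'))) := by
                    rw [Finset.sum_const, Finset.card_univ, Fintype.card_fin,
                      nsmul_eq_mul]
          _ = (M:ℝ) * ((M:ℝ) * (σΩΩ2 * ((U + 1) ^ 2 * (1 + f')))) := by
              rw [Finset.sum_const, Finset.card_univ, Fintype.card_fin, nsmul_eq_mul]
      have hb1 := hθθb b b'
      have hMnn : (0:ℝ) ≤ (M:ℝ) := Nat.cast_nonneg _
      have hfin : |(∫ ω, Th ω b * Th ω b' ∂P)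
            - (∑ cc', ∫ ω, (Th ω b * Wk ω b' cc') * (uhat cc' + e' ω cc') ∂P)
            - (∑ cc, ∫ ω, (Wk ω b cc * Th ω b') * (uhat cc + e' ω cc) ∂P)
            + ∑ cc, ∑ cc', ∫ ω, (Wk ω b cc * Wk ω b' cc')
                * ((uhat cc + e' ω cc) * (uhat cc' + e' ω cc')) ∂P|
          ≤ σθθ2 + 2 * ((M:ℝ) * (σΩθ2 * ((U + 1) * (1 + f'))))
            + (M:ℝ) * ((M:ℝ) * (σΩΩ2 * ((U + 1) ^ 2 * (1 + f')))) := by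
        have h0 := abs_comb4 (∫ ω, Th ω b * Th ω b' ∂P)
          (∑ cc', ∫ ω, (Th ω b * Wk ω b' cc') * (uhat cc' + e' ω cc') ∂P)
          (∑ cc, ∫ ω, (Wk ω b cc * Th ω b') * (uhat cc + e' ω cc) ∂P)
          (∑ cc, ∑ cc', ∫ ω, (Wk ω b cc * Wk ω b' cc')
                * ((uhat cc + e' ω cc) * (uhat cc' + e' ω cc')) ∂P)
        linarith only [h0, hb1, hs2, hs3, hs4]
      have hKexp : Kξ * (1 + f') = σθθ2 * (1 + f')
          + 2 * ((M:ℝ) * (σΩθ2 * ((U + 1) * (1 + f'))))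
          + (M:ℝ) * ((M:ℝ) * (σΩΩ2 * ((U + 1) ^ 2 * (1 + f')))) := by
        rw [hKξdef]; ring
      have hσθθf : σθθ2 ≤ σθθ2 * (1 + f') := by
        have h9 := mul_nonneg hσθθ hf'nn
        have h10 : σθθ2 * (1 + f') = σθθ2 + σθθ2 * f' := by ring
        linarith only [h9, h10]
      rw [hKexp]
      linarith only [hfin, hσθθf]
  -- bound on ww second moment
  have hRnn : (0:ℝ) ≤ R := by linarith
  have hΨprod : ∀ i b b', |Ψ i b * Ψ i b'| ≤ R := by
    intro i b b'
    have hentry : ∀ (ii bb : Fin M), (Ψ ii bb) ^ 2 ≤ R := by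
      intro ii bb
      calc (Ψ ii bb) ^ 2 ≤ ∑ j, (Ψ ii j) ^ 2 :=
            Finset.single_le_sum (f := fun j => (Ψ ii j) ^ 2)
              (fun _ _ => sq_nonneg _) (Finset.mem_univ bb)
        _ ≤ ∑ i', ∑ j, (Ψ i' j) ^ 2 :=
            Finset.single_le_sum (f := fun i' => ∑ j, (Ψ i' j) ^ 2)
              (fun _ _ => Finset.sum_nonneg fun _ _ => sq_nonneg _) (Finset.mem_univ ii)
        _ ≤ R := hΨ
    have h1 : |Ψ i b| ≤ Real.sqrt R := by
      rw [← Real.sqrt_sq_eq_abs]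
      exact Real.sqrt_le_sqrt (hentry i b)
    have h2 : |Ψ i b'| ≤ Real.sqrt R := by
      rw [← Real.sqrt_sq_eq_abs]
      exact Real.sqrt_le_sqrt (hentry i b')
    rw [abs_mul]
    calc |Ψ i b| * |Ψ i b'| ≤ Real.sqrt R * Real.sqrt R :=
          mul_le_mul h1 h2 (abs_nonneg _) (Real.sqrt_nonneg _)
      _ = R := Real.mul_self_sqrt hRnn
  have hKf'nn : 0 ≤ Kξ * (1 + f') := mul_nonneg hKξnn (by linarith only [hf'nn])
  have hww2 : ∀ i, Integrable (fun ω => wwf ω i * wwf ω i) P ∧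
      ∫ ω, wwf ω i * wwf ω i ∂P ≤ (M:ℝ) ^ 2 * R * Kξ * (1 + f') := by
    intro i
    have hptw : (fun ω => wwf ω i * wwf ω i)
        = fun ω => ∑ b, ∑ b', (Ψ i b * Ψ i b') * (ξ ω b * ξ ω b') := by
      funext ω
      rw [hwwdef]
      simp only
      rw [Finset.sum_mul_sum]
      exact Finset.sum_congr rfl fun b _ => Finset.sum_congr rfl fun b' _ => by ring
    have hI : Integrable (fun ω => ∑ b, ∑ b', (Ψ i b * Ψ i b') * (ξ ω b * ξ ω b')) P :=
      integrable_finset_sum _ fun b _ => integrable_finset_sum _ fun b' _ =>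
        ((hξξ b b').1).const_mul _
    constructor
    · rw [hptw]; exact hI
    · rw [hptw]
      rw [integral_finset_sum _ fun b _ => integrable_finset_sum _ fun b' _ =>
        ((hξξ b b').1).const_mul _]
      have hterm : ∀ b b' : Fin M, ∫ ω, (Ψ i b * Ψ i b') * (ξ ω b * ξ ω b') ∂P
          ≤ R * (Kξ * (1 + f')) := by
        intro b b'
        rw [integral_const_mul]
        calc Ψ i b * Ψ i b' * ∫ ω, ξ ω b * ξ ω b' ∂P
            ≤ |Ψ i b * Ψ i b' * ∫ ω, ξ ω b * ξ ω b' ∂P| := le_abs_self _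
          _ = |Ψ i b * Ψ i b'| * |∫ ω, ξ ω b * ξ ω b' ∂P| := abs_mul _ _
          _ ≤ R * (Kξ * (1 + f')) :=
              mul_le_mul (hΨprod i b b') (hξξ b b').2 (abs_nonneg _) hRnn
      calc ∑ b, ∫ ω, ∑ b', (Ψ i b * Ψ i b') * (ξ ω b * ξ ω b') ∂P
          = ∑ b, ∑ b', ∫ ω, (Ψ i b * Ψ i b') * (ξ ω b * ξ ω b') ∂P :=
            Finset.sum_congr rfl fun b _ =>
              integral_finset_sum _ fun b' _ => ((hξξ b b').1).const_mul _
        _ ≤ ∑ _b : Fin M, ∑ _b' : Fin M, R * (Kξ * (1 + f')) :=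
            Finset.sum_le_sum fun b _ => Finset.sum_le_sum fun b' _ => hterm b b'
        _ = (M:ℝ) ^ 2 * R * Kξ * (1 + f') := by
            rw [Finset.sum_const, Finset.sum_const, Finset.card_univ, Fintype.card_fin,
              nsmul_eq_mul, nsmul_eq_mul]
            ring
  -- pointwise contraction
  have hcontr_pt : ∀ x : Fin M → ℝ,
      ∑ i, (∑ jj, G i jj * x jj) * (∑ jj, G i jj * x jj)
        ≤ (1 - c * mu) * ∑ i, x i ^ 2 := by
    intro x
    set v : Fin M → ℝ := (Ψ * A).mulVec x with hvdef
    have hSnn : (0:ℝ) ≤ ∑ i, x i ^ 2 := Finset.sum_nonneg fun _ _ => sq_nonneg _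
    have hGx : ∀ i, (∑ jj, G i jj * x jj) = x i - mu * v i := by
      intro i
      have h1 : G.mulVec x = x - mu • v := by
        rw [hGdef, Matrix.sub_mulVec, Matrix.one_mulVec, Matrix.smul_mulVec, hvdef]
      have h2 := congrFun h1 i
      simp only [Matrix.mulVec, dotProduct, Pi.sub_apply, Pi.smul_apply,
        smul_eq_mul] at h2
      exact h2
    have hsum1 : ∑ i, (∑ jj, G i jj * x jj) * (∑ jj, G i jj * x jj)
        = (∑ i, x i ^ 2) - 2 * mu * (∑ i, x i * v i) + mu ^ 2 * ∑ i, v i ^ 2 := by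
      rw [Finset.sum_congr rfl fun i _ => by rw [hGx i]]
      have : ∀ i : Fin M, (x i - mu * v i) * (x i - mu * v i)
          = x i ^ 2 - 2 * mu * (x i * v i) + mu ^ 2 * v i ^ 2 := fun i => by ring
      rw [Finset.sum_congr rfl fun i _ => this i]
      rw [Finset.sum_add_distrib, Finset.sum_sub_distrib, ← Finset.mul_sum,
        ← Finset.mul_sum]
    have hxv : c * ∑ i, x i ^ 2 ≤ ∑ i, x i * v i := by
      have h3 := hquad x
      have h4 : x ⬝ᵥ (Ψ * A).mulVec x = ∑ i, x i * v i := by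
        rw [hvdef]; rfl
      linarith only [h3, h4.symm.le, h4.le]
    have hv2 : ∑ i, v i ^ 2 ≤ (R * SA) * ∑ i, x i ^ 2 := by
      have hrow : ∀ i, v i ^ 2 ≤ (∑ jj, ((Ψ * A) i jj) ^ 2) * ∑ jj, x jj ^ 2 := by
        intro i
        have h5 : v i = ∑ jj, (Ψ * A) i jj * x jj := by
          rw [hvdef]; rfl
        rw [h5]
        exact Finset.sum_mul_sq_le_sq_mul_sq Finset.univ _ _
      have hfrob : ∑ i, ∑ jj, ((Ψ * A) i jj) ^ 2 ≤ R * SA := by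
        have hent : ∀ i jj, ((Ψ * A) i jj) ^ 2
            ≤ (∑ l, (Ψ i l) ^ 2) * ∑ l, (A l jj) ^ 2 := by
          intro i jj
          rw [Matrix.mul_apply]
          exact Finset.sum_mul_sq_le_sq_mul_sq Finset.univ _ _
        calc ∑ i, ∑ jj, ((Ψ * A) i jj) ^ 2
            ≤ ∑ i, ∑ jj, (∑ l, (Ψ i l) ^ 2) * ∑ l, (A l jj) ^ 2 :=
              Finset.sum_le_sum fun i _ => Finset.sum_le_sum fun jj _ => hent i jj
          _ = (∑ i, ∑ l, (Ψ i l) ^ 2) * ∑ jj, ∑ l, (A l jj) ^ 2 := by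
              rw [Finset.sum_mul_sum]
          _ ≤ R * SA := by
              have hA2 : ∑ jj, ∑ l, (A l jj) ^ 2 = ∑ l, ∑ jj, (A l jj) ^ 2 :=
                Finset.sum_comm
              have hA3 : ∑ jj, ∑ l, (A l jj) ^ 2 ≤ SA := by rw [hA2]; exact hSA
              have hA4 : (0:ℝ) ≤ ∑ jj, ∑ l, (A l jj) ^ 2 :=
                Finset.sum_nonneg fun _ _ => Finset.sum_nonneg fun _ _ => sq_nonneg _
              have hA5 : (0:ℝ) ≤ ∑ i, ∑ l, (Ψ i l) ^ 2 :=
                Finset.sum_nonneg fun _ _ => Finset.sum_nonneg fun _ _ => sq_nonneg _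
              exact mul_le_mul hΨ hA3 hA4 hRnn
      calc ∑ i, v i ^ 2 ≤ ∑ i, (∑ jj, ((Ψ * A) i jj) ^ 2) * ∑ jj, x jj ^ 2 :=
            Finset.sum_le_sum fun i _ => hrow i
        _ = (∑ i, ∑ jj, ((Ψ * A) i jj) ^ 2) * ∑ jj, x jj ^ 2 := by
            rw [Finset.sum_mul]
        _ ≤ (R * SA) * ∑ i, x i ^ 2 := by
            apply mul_le_mul_of_nonneg_right hfrob hSnn
    rw [hsum1]
    have h1 : 2 * mu * (c * ∑ i, x i ^ 2) ≤ 2 * mu * ∑ i, x i * v i :=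
      mul_le_mul_of_nonneg_left hxv (by positivity)
    have h2 : mu ^ 2 * ∑ i, v i ^ 2 ≤ mu ^ 2 * ((R * SA) * ∑ i, x i ^ 2) :=
      mul_le_mul_of_nonneg_left hv2 (sq_nonneg mu)
    have h3 : mu * (R * SA) ≤ c - mu := by
      have h5 : mu * (R * SA + 1) = mu * (R * SA) + mu := by ring
      linarith only [hmuR2, h5]
    have h4 : mu * (R * SA) * (mu * ∑ i, x i ^ 2) ≤ (c - mu) * (mu * ∑ i, x i ^ 2) :=
      mul_le_mul_of_nonneg_right h3 (mul_nonneg hmu.le hSnn)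
    nlinarith only [h1, h2, h4, hSnn, hmu, mul_nonneg (mul_nonneg hmu.le hmu.le) hSnn]
  -- assembling everything
  have hdecf : ∀ i, (fun ω => (ek ω i) ^ 2)
      = fun ω => uu ω i * uu ω i + 2 * mu * (uu ω i * wwf ω i)
        + mu ^ 2 * (wwf ω i * wwf ω i) := by
    intro i
    funext ω
    rw [hdeci ω i]
    ring
  have hIcross : ∀ i, Integrable (fun ω => 2 * mu * (uu ω i * wwf ω i)) P :=
    fun i => ((hint_uw i).1).const_mul _
  have hIww2 : ∀ i, Integrable (fun ω => mu ^ 2 * (wwf ω i * wwf ω i)) P :=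
    fun i => ((hww2 i).1).const_mul _
  have hval_i : ∀ i, ∫ ω, (ek ω i) ^ 2 ∂P
      = (∫ ω, uu ω i * uu ω i ∂P) + 2 * mu * (∫ ω, uu ω i * wwf ω i ∂P)
        + mu ^ 2 * ∫ ω, wwf ω i * wwf ω i ∂P := by
    intro i
    rw [hdecf i]
    have hIa : Integrable (fun ω => uu ω i * uu ω i
        + 2 * mu * (uu ω i * wwf ω i)) P := (hint_uu2 i).add (hIcross i)
    rw [integral_add hIa (hIww2 i), integral_add (hint_uu2 i) (hIcross i),
      integral_const_mul, integral_const_mul]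
  have hsumdec : ∑ i, ∫ ω, (ek ω i) ^ 2 ∂P
      = (∑ i, ∫ ω, uu ω i * uu ω i ∂P)
        + 2 * mu * (∑ i, ∫ ω, uu ω i * wwf ω i ∂P)
        + mu ^ 2 * ∑ i, ∫ ω, wwf ω i * wwf ω i ∂P := by
    rw [Finset.sum_congr rfl fun i _ => hval_i i]
    rw [Finset.sum_add_distrib, Finset.sum_add_distrib, ← Finset.mul_sum,
      ← Finset.mul_sum]
  have hcross0 : ∑ i, ∫ ω, uu ω i * wwf ω i ∂P = 0 := by
    rw [Finset.sum_congr rfl fun i _ => (hint_uw i).2]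
    simp
  have hAterm : ∑ i, ∫ ω, uu ω i * uu ω i ∂P ≤ (1 - c * mu) * f' := by
    have h1 : ∑ i, ∫ ω, uu ω i * uu ω i ∂P = ∫ ω, ∑ i, uu ω i * uu ω i ∂P :=
      (integral_finset_sum _ fun i _ => hint_uu2 i).symm
    have h2 : ∫ ω, ∑ i, uu ω i * uu ω i ∂P
        ≤ ∫ ω, (1 - c * mu) * ∑ i, (e' ω i) ^ 2 ∂P := by
      apply integral_mono (integrable_finset_sum _ fun i _ => hint_uu2 i)
        ((integrable_finset_sum _ fun i _ => he'sqI i).const_mul _)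
      intro ω
      have h3 := hcontr_pt (e' ω)
      simp only [huudef]
      exact h3
    have h4 : ∫ ω, (1 - c * mu) * ∑ i, (e' ω i) ^ 2 ∂P = (1 - c * mu) * f' := by
      rw [integral_const_mul, integral_finset_sum _ fun i _ => he'sqI i, ← hf'def]
    linarith only [h1, h2, h4]
  have hBterm : ∑ i, ∫ ω, wwf ω i * wwf ω i ∂P
      ≤ (M:ℝ) * ((M:ℝ) ^ 2 * R * Kξ * (1 + f')) := by
    calc ∑ i, ∫ ω, wwf ω i * wwf ω i ∂P
        ≤ ∑ _i : Fin M, (M:ℝ) ^ 2 * R * Kξ * (1 + f') :=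
          Finset.sum_le_sum fun i _ => (hww2 i).2
      _ = (M:ℝ) * ((M:ℝ) ^ 2 * R * Kξ * (1 + f')) := by
          rw [Finset.sum_const, Finset.card_univ, Fintype.card_fin, nsmul_eq_mul]
  have hmusq : mu ^ 2 * ∑ i, ∫ ω, wwf ω i * wwf ω i ∂P
      ≤ mu ^ 2 * ((M:ℝ) * ((M:ℝ) ^ 2 * R * Kξ * (1 + f'))) :=
    mul_le_mul_of_nonneg_left hBterm (sq_nonneg mu)
  have hring : mu ^ 2 * ((M:ℝ) * ((M:ℝ) ^ 2 * R * Kξ * (1 + f')))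
      = (M:ℝ) ^ 3 * R * Kξ * mu ^ 2 * (1 + f') := by ring
  rw [hsumdec, hcross0]
  rw [mul_zero, add_zero]
  linarith only [hAterm, hmusq, hring]


/-- Theorem 2: there exist `γ₀ > 0` and `μ̂₀ > 0` such that for every
`γ ∈ [0, γ₀]` (so `B + γC` is invertible) and every step-size sequence with
`0 < μ_k ≤ μ̂₀`, `Σ μ_k = ∞` and `Σ μ_k² < ∞`, the error process satisfies
`lim_k E[e^k (e^k)ᵀ] = 0`. -/
theorem theorem2_mean_square_convergence
    {M : ℕ} {Ω' : Type} [MeasurableSpace Ω'] (P : Measure Ω') [IsProbabilityMeasure P]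
    (A B C : Matrix (Fin M) (Fin M) ℝ)
    (hA : A.PosDef)
    (hBsymm : B.IsSymm) (hBinv : IsUnit B)
    (hBA : ∀ x : Fin M → ℝ, euclNorm x = 1 → 0 < x ⬝ᵥ (B⁻¹ * A).mulVec x)
    (hC : C.PosSemidef)
    (uhat : Fin M → ℝ)
    (θ : ℕ → Ω' → Fin M → ℝ) (W : ℕ → Ω' → Matrix (Fin M) (Fin M) ℝ)
    (hWsymm : ∀ k ω, (W k ω).IsSymm)
    (hθint : ∀ k, IntV P (θ k)) (hθmean : ∀ k, 1 ≤ k → Evec P (θ k) = 0)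
    (hWint : ∀ k, IntM P (W k)) (hWmean : ∀ k, 1 ≤ k → Emat P (W k) = 0)
    (hintθθ : ∀ k, 1 ≤ k → IntM P (fun ω => vecMulVec (θ k ω) (θ k ω)))
    (hintΩΩ : ∀ k, 1 ≤ k → IntM P (fun ω => vecOuter (W k ω) (W k ω)))
    (hintΩθ : ∀ k, 1 ≤ k → IntM P (fun ω => vecOuterVec (W k ω) (θ k ω)))
    (σθθ2 σΩΩ2 σΩθ2 : ℝ)
    (hσθθ : ∀ k, 1 ≤ k → frobNorm (Emat P (fun ω => vecMulVec (θ k ω) (θ k ω))) = σθθ2)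
    (hσΩΩ : ∀ k, 1 ≤ k → frobNorm (Emat P (fun ω => vecOuter (W k ω) (W k ω))) = σΩΩ2)
    (hσΩθ : ∀ k, 1 ≤ k → frobNorm (Emat P (fun ω => vecOuterVec (W k ω) (θ k ω))) = σΩθ2) :
    ∃ γ₀ : ℝ, 0 < γ₀ ∧ ∃ muhat0 : ℝ, 0 < muhat0 ∧
      ∀ γ : ℝ, 0 ≤ γ → γ ≤ γ₀ →
        IsUnit (B + γ • C) ∧
        ∀ μ : ℕ → ℝ, (∀ k, 1 ≤ k → 0 < μ k ∧ μ k ≤ muhat0) →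
          ¬ Summable (fun k : ℕ => μ (k + 1)) →
          Summable (fun k : ℕ => (μ (k + 1)) ^ 2) →
          ∀ e : ℕ → Ω' → Fin M → ℝ,
            (∀ k, 1 ≤ k → ∀ ω, e k ω =
                (1 - μ k • ((B + γ • C)⁻¹ * (A + W k ω))).mulVec (e (k - 1) ω)
                  + μ k • (B + γ • C)⁻¹.mulVec (θ k ω - (W k ω).mulVec uhat)) →
            (∀ k, 1 ≤ k → IndepFun (fun ω => (θ k ω, W k ω)) (fun ω => e (k - 1) ω) P) →
            (∀ k, IntV P (e k)) →
            (∀ k, IntM P (fun ω => vecMulVec (e k ω) (e k ω))) →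
            (∀ k, 1 ≤ k → IntM P (fun ω =>
                vecMulVec (θ k ω - (W k ω).mulVec uhat) (θ k ω - (W k ω).mulVec uhat))) →
            (∀ k, 1 ≤ k → IntM P (fun ω =>
                W k ω * vecMulVec (e (k - 1) ω) (e (k - 1) ω) * W k ω)) →
            (∀ k, 1 ≤ k → IntM P (fun ω => W k ω * vecMulVec (e (k - 1) ω) (θ k ω))) →
            (∀ k, 1 ≤ k → IntM P (fun ω =>
                W k ω * vecMulVec (e (k - 1) ω) uhat * W k ω)) →
            (∀ k, 1 ≤ k → IntM P (fun ω => vecMulVec (θ k ω) (e (k - 1) ω) * W k ω)) →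
            (∀ k, 1 ≤ k → IntM P (fun ω =>
                W k ω * vecMulVec uhat (e (k - 1) ω) * W k ω)) →
            (∀ k, 1 ≤ k → IntM P (fun ω =>
                vecMulVec (e (k - 1) ω) (θ k ω - (W k ω).mulVec uhat))) →
            (∀ k, 1 ≤ k → IntM P (fun ω =>
                W k ω * vecMulVec (e (k - 1) ω) (e (k - 1) ω))) →
            ∀ i j : Fin M,
              Tendsto (fun k : ℕ => Emat P (fun ω => vecMulVec (e k ω) (e k ω)) i j)
                atTop (nhds 0) := by
  rcases Nat.eq_zero_or_pos M with hM0 | hM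
  · subst hM0
    refine ⟨1, one_pos, 1, one_pos, fun γ _ _ => ⟨?_, ?_⟩⟩
    · rw [Matrix.isUnit_iff_isUnit_det, Matrix.det_fin_zero]
      exact isUnit_one
    · intro μ _ _ _ e _ _ _ _ _ _ _ _ _ _ _ _ i j
      exact i.elim0
  · obtain ⟨γ₀, hγ₀pos, c, hcpos, R, hR1, hkey⟩ := exists_gamma_c hM A B C hBinv hBA
    set SA : ℝ := ∑ l, ∑ j, (A l j) ^ 2 with hSAdef
    have hSAnn : 0 ≤ SA := by
      rw [hSAdef]
      exact Finset.sum_nonneg fun _ _ => Finset.sum_nonneg fun _ _ => sq_nonneg _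
    have hσθθnn : 0 ≤ σθθ2 := by rw [← hσθθ 1 le_rfl]; exact frobNorm_nonneg _
    have hσΩΩnn : 0 ≤ σΩΩ2 := by rw [← hσΩΩ 1 le_rfl]; exact frobNorm_nonneg _
    have hσΩθnn : 0 ≤ σΩθ2 := by rw [← hσΩθ 1 le_rfl]; exact frobNorm_nonneg _
    have hMnn : (0:ℝ) ≤ (M:ℝ) := Nat.cast_nonneg _
    have hUnn : (0:ℝ) ≤ 1 + ∑ cc, |uhat cc| := by
      have : (0:ℝ) ≤ ∑ cc, |uhat cc| := Finset.sum_nonneg fun _ _ => abs_nonneg _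
      linarith
    set KK : ℝ := (M:ℝ) ^ 3 * R * (σθθ2 + 2 * (M:ℝ) * σΩθ2 * ((1 + ∑ cc, |uhat cc|) + 1)
        + (M:ℝ) ^ 2 * σΩΩ2 * ((1 + ∑ cc, |uhat cc|) + 1) ^ 2) with hKKdef
    have hKKnn : 0 ≤ KK := by
      rw [hKKdef]
      have h2 : (0:ℝ) ≤ (1 + ∑ cc, |uhat cc|) + 1 := by linarith
      have t1 : (0:ℝ) ≤ 2 * (M:ℝ) * σΩθ2 * ((1 + ∑ cc, |uhat cc|) + 1) :=
        mul_nonneg (mul_nonneg (mul_nonneg (by norm_num) hMnn) hσΩθnn) h2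
      have t2 : (0:ℝ) ≤ (M:ℝ) ^ 2 * σΩΩ2 * ((1 + ∑ cc, |uhat cc|) + 1) ^ 2 :=
        mul_nonneg (mul_nonneg (pow_nonneg hMnn 2) hσΩΩnn) (sq_nonneg _)
      exact mul_nonneg (mul_nonneg (pow_nonneg hMnn 3) (by linarith)) (by linarith)
    have hden1 : (0:ℝ) < R * SA + 1 := by nlinarith [mul_nonneg (by linarith : (0:ℝ) ≤ R) hSAnn]
    set muhat0 : ℝ := min (c / (R * SA + 1)) (min (c / (2 * KK + 2)) (1 / c)) with hmuhat
    have hmuhatpos : 0 < muhat0 := by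
      rw [hmuhat]
      have hd2 : (0:ℝ) < 2 * KK + 2 := by linarith
      exact lt_min (by positivity) (lt_min (by positivity) (by positivity))
    refine ⟨γ₀, hγ₀pos, muhat0, hmuhatpos, fun γ hγ0 hγle => ?_⟩
    obtain ⟨hunit, hquad, hΨb⟩ := hkey γ hγ0 hγle
    refine ⟨hunit, ?_⟩
    intro μ hμ hdiv hsq e hrec hIndep heint hEEk _ _ _ _ _ _ _ _ i j
    set f : ℕ → ℝ := fun n => ∑ i', ∫ ω, (e n ω i') ^ 2 ∂P with hfdef
    have hEE : ∀ n cc cc', Integrable (fun ω => e n ω cc * e n ω cc') P := by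
      intro n cc cc'
      have h := hEEk n cc cc'
      simpa [Matrix.vecMulVec_apply] using h
    have hEsq : ∀ n i', Integrable (fun ω => (e n ω i') ^ 2) P := by
      intro n i'
      have h2 : (fun ω => (e n ω i') ^ 2) = fun ω => e n ω i' * e n ω i' := by
        funext ω; ring
      rw [h2]; exact hEE n i' i'
    have hf0 : ∀ n, 0 ≤ f n := fun n =>
      Finset.sum_nonneg fun i' _ => integral_nonneg fun ω => sq_nonneg _
    have hstep : ∀ k, 1 ≤ k → f k ≤ (1 - c / 2 * μ k) * f (k - 1) + KK * μ k ^ 2 := by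
      intro k hk
      obtain ⟨hμpos, hμle⟩ := hμ k hk
      have hθ0 : ∀ b, ∫ ω, θ k ω b ∂P = 0 := by
        intro b
        have h := congrFun (hθmean k hk) b
        simpa [Evec] using h
      have hW0 : ∀ b cc, ∫ ω, W k ω b cc ∂P = 0 := by
        intro b cc
        have h := congrFun (congrFun (hWmean k hk) b) cc
        simpa [Emat] using h
      have hθθI : ∀ b b', Integrable (fun ω => θ k ω b * θ k ω b') P := by
        intro b b'
        have h := hintθθ k hk b b'
        simpa [Matrix.vecMulVec_apply] using h
      have hWWI : ∀ b cc b' cc', Integrable (fun ω => W k ω b cc * W k ω b' cc') P := by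
        intro b cc b' cc'
        have h := hintΩΩ k hk (b, cc) (b', cc')
        simpa [vecOuter] using h
      have hWθI : ∀ b cc b', Integrable (fun ω => W k ω b cc * θ k ω b') P := by
        intro b cc b'
        have h := hintΩθ k hk (b, cc) b'
        simpa [vecOuterVec] using h
      have hθθb : ∀ b b', |∫ ω, θ k ω b * θ k ω b' ∂P| ≤ σθθ2 := by
        intro b b'
        have h := abs_entry_le_frobNorm (Emat P (fun ω => vecMulVec (θ k ω) (θ k ω))) b b'
        rw [hσθθ k hk] at h
        have he : Emat P (fun ω => vecMulVec (θ k ω) (θ k ω)) b b'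
            = ∫ ω, θ k ω b * θ k ω b' ∂P := by
          simp [Emat, Matrix.vecMulVec_apply]
        rwa [he] at h
      have hWθb : ∀ b cc b', |∫ ω, W k ω b cc * θ k ω b' ∂P| ≤ σΩθ2 := by
        intro b cc b'
        have h := abs_entry_le_frobNorm
          (Emat P (fun ω => vecOuterVec (W k ω) (θ k ω))) (b, cc) b'
        rw [hσΩθ k hk] at h
        have he : Emat P (fun ω => vecOuterVec (W k ω) (θ k ω)) (b, cc) b'
            = ∫ ω, W k ω b cc * θ k ω b' ∂P := by
          simp [Emat, vecOuterVec]
        rwa [he] at h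
      have hWWb : ∀ b cc b' cc', |∫ ω, W k ω b cc * W k ω b' cc' ∂P| ≤ σΩΩ2 := by
        intro b cc b' cc'
        have h := abs_entry_le_frobNorm
          (Emat P (fun ω => vecOuter (W k ω) (W k ω))) (b, cc) (b', cc')
        rw [hσΩΩ k hk] at h
        have he : Emat P (fun ω => vecOuter (W k ω) (W k ω)) (b, cc) (b', cc')
            = ∫ ω, W k ω b cc * W k ω b' cc' ∂P := by
          simp [Emat, vecOuter]
        rwa [he] at h
      have hmuR2 : μ k * (R * SA + 1) ≤ c := by
        have h := le_trans hμle (min_le_left _ _)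
        rwa [le_div_iff₀ hden1] at h
      have hstep0 := key_step P A ((B + γ • C)⁻¹) uhat c R SA σθθ2 σΩθ2 σΩΩ2 (μ k)
        hcpos hR1 hμpos hSAdef.ge hΨb hquad hmuR2 hσθθnn hσΩθnn hσΩΩnn
        (θ k) (W k) (e (k - 1)) (e k) (hrec k hk) (hIndep k hk)
        (hθint k) (hWint k) (heint (k - 1)) (hEE (k - 1))
        hθθI hWWI hWθI hθ0 hW0 hθθb hWθb hWWb
      rw [← hKKdef] at hstep0
      have hKμ : KK * μ k ≤ c / 2 := by
        have h := le_trans hμle (le_trans (min_le_right _ _) (min_le_left _ _))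
        have hd2 : (0:ℝ) < 2 * KK + 2 := by linarith
        rw [le_div_iff₀ hd2] at h
        nlinarith [hμpos.le]
      have hS'nn : (0:ℝ) ≤ ∑ i', ∫ ω, (e (k - 1) ω i') ^ 2 ∂P :=
        Finset.sum_nonneg fun i' _ => integral_nonneg fun ω => sq_nonneg _
      have h5 : KK * μ k * (μ k * ∑ i', ∫ ω, (e (k - 1) ω i') ^ 2 ∂P)
          ≤ c / 2 * (μ k * ∑ i', ∫ ω, (e (k - 1) ω i') ^ 2 ∂P) :=
        mul_le_mul_of_nonneg_right hKμ (mul_nonneg hμpos.le hS'nn)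
      show (∑ i', ∫ ω, (e k ω i') ^ 2 ∂P)
        ≤ (1 - c / 2 * μ k) * (∑ i', ∫ ω, (e (k - 1) ω i') ^ 2 ∂P) + KK * μ k ^ 2
      nlinarith only [hstep0, h5, hS'nn, hμpos]
    have hcontr : ∀ k, 1 ≤ k → 0 ≤ 1 - c / 2 * μ k := by
      intro k hk
      obtain ⟨hμpos, hμle⟩ := hμ k hk
      have h := le_trans hμle (le_trans (min_le_right _ _) (min_le_right _ _))
      rw [le_div_iff₀ hcpos] at h
      nlinarith [hμpos.le]
    have htend : Tendsto f atTop (nhds 0) :=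
      scalar_tendsto (c / 2) KK (by positivity) hKKnn μ f hf0
        (fun k hk => (hμ k hk).1) hcontr hstep hdiv hsq
    have hbnd : ∀ n, |Emat P (fun ω => vecMulVec (e n ω) (e n ω)) i j| ≤ f n := by
      intro n
      have he : Emat P (fun ω => vecMulVec (e n ω) (e n ω)) i j
          = ∫ ω, e n ω i * e n ω j ∂P := by
        simp [Emat, Matrix.vecMulVec_apply]
      rw [he]
      have h := abs_integral_mul_le P (fun ω => e n ω i) (fun ω => e n ω j)
        (hEsq n i) (hEsq n j) (hEE n i j)
      have h2 : ∫ ω, (e n ω i) ^ 2 ∂P ≤ f n := by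
        rw [hfdef]
        exact Finset.single_le_sum (f := fun i' => ∫ ω, (e n ω i') ^ 2 ∂P)
          (fun _ _ => integral_nonneg fun _ => sq_nonneg _) (Finset.mem_univ i)
      have h3 : ∫ ω, (e n ω j) ^ 2 ∂P ≤ f n := by
        rw [hfdef]
        exact Finset.single_le_sum (f := fun i' => ∫ ω, (e n ω i') ^ 2 ∂P)
          (fun _ _ => integral_nonneg fun _ => sq_nonneg _) (Finset.mem_univ j)
      linarith only [h, h2, h3]
    have hneg : Tendsto (fun n => -f n) atTop (nhds 0) := by
      have h9 := htend.neg
      rw [neg_zero] at h9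
      exact h9
    exact tendsto_of_tendsto_of_tendsto_of_le_of_le hneg htend
      (fun n => (abs_le.1 (hbnd n)).1) (fun n => (abs_le.1 (hbnd n)).2)
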